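/- Path doubling: let G be a weighted undirected graph with minimum edge weight at least 1, let β ≥ 1 and ε₁ > 0, and suppose H is a set of weighted edges on V(G) such that (i) each edge of H has weight at least the G-distance between its endpoints, and (ii) for every pair u, v with d_G(u, v) ≤ 2^j, d_{G ∪ H}^{(β)}(u, v) ≤ (1+ε₁)·d_G(u, v). Then for every pair x, y with d_G(x, y) ≤ 2^{j+1}, we have d_{G ∪ H}^{(2β+1)}(x, y) ≤ (1+ε₁)·d_G(x, y). -/

import Mathlib

open scoped ENNReal NNReal BigOperators Classical

noncomputable def hdist {V : Type*} [Fintype V] [DecidableEq V]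
    (w : V → V → ℝ≥0∞) : ℕ → V → V → ℝ≥0∞
  | 0, u, v => if u = v then 0 else ⊤
  | h + 1, u, v => min (hdist w h u v) (⨅ x, w u x + hdist w h x v)

noncomputable def gdist {V : Type*} [Fintype V] [DecidableEq V]
    (w : V → V → ℝ≥0∞) (u v : V) : ℝ≥0∞ :=
  ⨅ h : ℕ, hdist w h u v

section aux
variable {V : Type*} [Fintype V] [DecidableEq V] (w : V → V → ℝ≥0∞)

lemma hdist_self (h : ℕ) (u : V) : hdist w h u u = 0 := by
  induction h with
  | zero => simp [hdist]
  | succ h ih =>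
    refine le_antisymm ?_ zero_le
    simp only [hdist]
    exact le_trans (min_le_left _ _) ih.le

lemma hdist_succ_le (h : ℕ) (u v : V) : hdist w (h + 1) u v ≤ hdist w h u v := by
  simp only [hdist]; exact min_le_left _ _

lemma hdist_anti {h h' : ℕ} (hle : h ≤ h') (u v : V) :
    hdist w h' u v ≤ hdist w h u v := by
  induction h', hle using Nat.le_induction with
  | base => exact le_rfl
  | succ n hn ih => exact le_trans (hdist_succ_le w n u v) ih

lemma gdist_le_hdist (h : ℕ) (u v : V) : gdist w u v ≤ hdist w h u v :=
  iInf_le _ h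

lemma gdist_self (u : V) : gdist w u u = 0 :=
  le_antisymm (le_trans (gdist_le_hdist w 0 u u) (by simp [hdist])) zero_le

lemma hdist_triangle (h1 h2 : ℕ) (u m v : V) :
    hdist w (h1 + h2) u v ≤ hdist w h1 u m + hdist w h2 m v := by
  induction h1 generalizing u with
  | zero =>
    by_cases hum : u = m
    · subst hum; simp [hdist, Nat.zero_add]
    · simp [hdist, hum]
  | succ h1 ih =>
    have hnat : h1 + 1 + h2 = (h1 + h2) + 1 := by omega
    rw [hnat]
    simp only [hdist]
    rw [← min_add_add_right]
    refine le_min ?_ ?_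
    · exact le_trans (min_le_left _ _) (ih u)
    · rw [ENNReal.iInf_add]
      refine le_iInf fun z => ?_
      refine le_trans (min_le_right _ _) ?_
      refine le_trans (iInf_le _ z) ?_
      rw [add_assoc]
      exact add_le_add_right (ih z) _

lemma gdist_triangle (u m v : V) : gdist w u v ≤ gdist w u m + gdist w m v := by
  have key : ∀ h1 h2 : ℕ, gdist w u v ≤ hdist w h1 u m + hdist w h2 m v := fun h1 h2 =>
    le_trans (gdist_le_hdist w (h1 + h2) u v) (hdist_triangle w h1 h2 u m v)
  rw [show gdist w u m + gdist w m v
      = ⨅ h1, (hdist w h1 u m + gdist w m v) by rw [gdist, ENNReal.iInf_add]]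
  refine le_iInf fun h1 => ?_
  rw [show hdist w h1 u m + gdist w m v
      = ⨅ h2, (hdist w h1 u m + hdist w h2 m v) by rw [gdist, ENNReal.add_iInf]]
  exact le_iInf fun h2 => key h1 h2

lemma gdist_le_w (u v : V) : gdist w u v ≤ w u v := by
  refine le_trans (gdist_le_hdist w 1 u v) ?_
  simp only [hdist]
  refine le_trans (min_le_right _ _) (le_trans (iInf_le _ v) ?_)
  simp

lemma hdist_ge_min (hmin : ∀ u v, 1 ≤ w u v) :
    ∀ h : ℕ, ∀ u v : V, min ((h : ℝ≥0∞) + 1) (hdist w h u v) ≤ hdist w (h + 1) u v := by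
  intro h
  induction h with
  | zero =>
    intro u v
    simp only [hdist, Nat.cast_zero, zero_add]
    refine le_min (le_trans (min_le_right _ _) le_rfl) ?_
    refine le_iInf fun z => le_trans (min_le_left _ _) ?_
    exact le_trans (hmin u z) (le_add_right le_rfl)
  | succ h ih =>
    intro u v
    conv_rhs => simp only [hdist]
    refine le_min (min_le_right _ _) ?_
    refine le_iInf fun z => ?_
    rcases min_cases ((h : ℝ≥0∞) + 1) (hdist w h z v) with ⟨heq, _⟩ | ⟨heq, _⟩
    · -- min = h+1
      have h41 : (h : ℝ≥0∞) + 1 ≤ hdist w (h + 1) z v := heq ▸ ih z v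
      refine le_trans (min_le_left _ _) ?_
      push_cast
      calc ((h : ℝ≥0∞) + 1 + 1) = 1 + ((h : ℝ≥0∞) + 1) := by ring
        _ ≤ w u z + hdist w (h + 1) z v := add_le_add (hmin u z) h41
    · -- min = hdist h z v
      have h5 : hdist w h z v ≤ hdist w (h + 1) z v := heq ▸ ih z v
      have h6 : hdist w (h + 1) u v ≤ w u z + hdist w (h + 1) z v := by
        refine le_trans ?_ (add_le_add_right h5 _)
        simp only [hdist]
        exact le_trans (min_le_right _ _) (iInf_le _ z)
      exact le_trans (min_le_right _ _) h6

lemma exists_hdist_eq (hmin : ∀ u v, 1 ≤ w u v) (u v : V)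
    (hfin : gdist w u v ≠ ⊤) : ∃ N, hdist w N u v = gdist w u v := by
  obtain ⟨n, hn⟩ := ENNReal.exists_nat_gt hfin
  refine ⟨n, le_antisymm ?_ (gdist_le_hdist w n u v)⟩
  have claim : ∀ h, min (n : ℝ≥0∞) (hdist w n u v) ≤ hdist w h u v := by
    intro h
    rcases le_or_gt h n with hle | hlt
    · exact le_trans (min_le_right _ _) (hdist_anti w hle u v)
    · have : ∀ m, n ≤ m → min (n : ℝ≥0∞) (hdist w n u v) ≤ hdist w m u v := by
        intro m hm
        induction m, hm using Nat.le_induction with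
        | base => exact min_le_right _ _
        | succ m hm ih =>
          refine le_trans ?_ (hdist_ge_min w hmin m u v)
          refine le_min ?_ ih
          refine le_trans (min_le_left _ _) ?_
          exact_mod_cast le_trans (Nat.cast_le.mpr hm) (le_add_right le_rfl)
      exact this h hlt.le
  have hg : min (n : ℝ≥0∞) (hdist w n u v) ≤ gdist w u v := le_iInf claim
  rcases min_cases (n : ℝ≥0∞) (hdist w n u v) with ⟨heq, _⟩ | ⟨heq, _⟩
  · rw [heq] at hg; exact absurd hn (not_lt.mpr hg)
  · rw [heq] at hg; exact hg

lemma split_lemma (hmin : ∀ u v, 1 ≤ w u v) (j : ℕ) :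
    ∀ h : ℕ, ∀ c y x : V, ∀ P : ℝ≥0∞, hdist w h c y ≠ ⊤ → c ≠ y →
      gdist w x c ≤ P → P ≤ 2 ^ j → P + hdist w h c y ≤ 2 ^ (j + 1) →
      ∃ a b, gdist w x a ≤ 2 ^ j ∧ gdist w b y ≤ 2 ^ j ∧
        gdist w x a + w a b + gdist w b y ≤ P + hdist w h c y := by
  intro h
  induction h with
  | zero =>
    intro c y x P hfin hne _ _ _
    simp [hdist, hne] at hfin
  | succ h ih =>
    intro c y x P hfin hne hxc hP htot
    rcases le_total (hdist w h c y) (⨅ z, w c z + hdist w h z y) with hcase | hcase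
    · have heq : hdist w (h + 1) c y = hdist w h c y := by
        simp only [hdist]; exact min_eq_left hcase
      rw [heq] at hfin htot ⊢
      exact ih c y x P hfin hne hxc hP htot
    · have heq : hdist w (h + 1) c y = ⨅ z, w c z + hdist w h z y := by
        simp only [hdist]; exact min_eq_right hcase
      have : Nonempty V := ⟨c⟩
      obtain ⟨z, hz⟩ := Finite.exists_min (fun z => w c z + hdist w h z y)
      have hval : hdist w (h + 1) c y = w c z + hdist w h z y :=
        heq.trans (le_antisymm (iInf_le _ z) (le_iInf hz))
      rw [hval] at hfin htot ⊢
      have hwfin : w c z + hdist w h z y ≠ ⊤ := hfin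
      have h2jne : (2 : ℝ≥0∞) ^ j ≠ ⊤ := by
        exact ENNReal.pow_ne_top (by norm_num)
      have hPfin : P ≠ ⊤ := ne_top_of_le_ne_top h2jne hP
      by_cases hzy : z = y
      · subst hzy
        refine ⟨c, z, le_trans hxc hP, by rw [gdist_self]; exact zero_le, ?_⟩
        rw [gdist_self, add_zero, ← add_assoc]
        exact le_trans (add_le_add_left hxc _) le_self_add
      · by_cases hbig : 2 ^ j < P + w c z
        · -- suffix is short: split here, a = c, b = z
          have hPw : P + w c z ≠ ⊤ := by
            refine ENNReal.add_ne_top.mpr ⟨hPfin, ?_⟩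
            intro hw
            apply hwfin
            rw [hw, top_add]
          have hsuffix : hdist w h z y < 2 ^ j := by
            have h1 : (P + w c z) + hdist w h z y ≤ 2 ^ j + 2 ^ j := by
              rw [add_assoc]
              refine le_trans htot ?_
              rw [pow_succ, mul_two]
            have h2 : (2 : ℝ≥0∞) ^ j + 2 ^ j < (P + w c z) + 2 ^ j :=
              (ENNReal.add_lt_add_iff_right h2jne).mpr hbig
            have h3 : (P + w c z) + hdist w h z y < (P + w c z) + 2 ^ j :=
              lt_of_le_of_lt h1 h2
            exact (ENNReal.add_lt_add_iff_left hPw).mp h3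
          refine ⟨c, z, le_trans hxc hP,
            le_trans (gdist_le_hdist w h z y) hsuffix.le, ?_⟩
          rw [← add_assoc]
          exact add_le_add (add_le_add hxc le_rfl) (gdist_le_hdist w h z y)
        · -- keep going: apply IH at z with prefix P + w c z
          push_neg at hbig
          have hXfin : hdist w h z y ≠ ⊤ := by
            intro hX
            apply hwfin
            rw [hX, add_top]
          have hxz : gdist w x z ≤ P + w c z :=
            le_trans (gdist_triangle w x c z) (add_le_add hxc (gdist_le_w w c z))
          have htot' : (P + w c z) + hdist w h z y ≤ 2 ^ (j + 1) := by
            rw [add_assoc]; exact htot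
          obtain ⟨a, b, h1, h2, h3⟩ := ih z y x (P + w c z) hXfin hzy hxz hbig htot'
          exact ⟨a, b, h1, h2, by rw [← add_assoc]; exact h3⟩

end aux

/-- Path doubling: if `H` (whose edge weights dominate `G`-distances) provides
`(1+ε₁)`-approximate `β`-hop paths for all pairs at distance at most `2^j`, then it
provides `(1+ε₁)`-approximate `(2β+1)`-hop paths for all pairs at distance at most `2^{j+1}`. -/
theorem stmt_9 {V : Type*} [Fintype V] [DecidableEq V]
    (w H : V → V → ℝ≥0∞)
    (hsym : ∀ u v, w u v = w v u) (hHsym : ∀ u v, H u v = H v u)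
    (hmin : ∀ u v, 1 ≤ w u v)
    (β : ℕ) (hβ : 1 ≤ β) (ε₁ : ℝ≥0) (hε : 0 < ε₁) (j : ℕ)
    (hdom : ∀ u v, gdist w u v ≤ H u v)
    (hhop : ∀ u v, gdist w u v ≤ 2 ^ j →
      hdist (fun a b => min (w a b) (H a b)) β u v ≤ (1 + (ε₁ : ℝ≥0∞)) * gdist w u v)
    (x y : V) (hxy : gdist w x y ≤ 2 ^ (j + 1)) :
    hdist (fun a b => min (w a b) (H a b)) (2 * β + 1) x y ≤
      (1 + (ε₁ : ℝ≥0∞)) * gdist w x y := by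
  set mw := fun a b => min (w a b) (H a b) with hmw
  by_cases hxyeq : x = y
  · subst hxyeq
    calc hdist mw (2 * β + 1) x x ≤ hdist mw 0 x x := hdist_anti mw (Nat.zero_le _) x x
    _ = 0 := by simp [hdist]
    _ ≤ _ := zero_le
  · have hpowne : (2 : ℝ≥0∞) ^ (j + 1) ≠ ⊤ := ENNReal.pow_ne_top (by norm_num)
    have hfin : gdist w x y ≠ ⊤ := ne_top_of_le_ne_top hpowne hxy
    obtain ⟨N, hN⟩ := exists_hdist_eq w hmin x y hfin
    have hNfin : hdist w N x y ≠ ⊤ := by rw [hN]; exact hfin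
    have h0 : gdist w x x ≤ 0 := (gdist_self w x).le
    have htot : (0 : ℝ≥0∞) + hdist w N x y ≤ 2 ^ (j + 1) := by
      rw [zero_add, hN]; exact hxy
    obtain ⟨a, b, ha, hb, hsum⟩ :=
      split_lemma w hmin j N x y x 0 hNfin hxyeq h0 zero_le htot
    rw [zero_add, hN] at hsum
    -- hop decomposition
    have hhops : hdist mw (2 * β + 1) x y ≤
        hdist mw β x a + (mw a b + hdist mw β b y) := by
      have hsplit : hdist mw (β + (β + 1)) x y ≤
          hdist mw β x a + hdist mw (β + 1) a y :=
        hdist_triangle mw β (β + 1) x a y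
      have hedge : hdist mw (β + 1) a y ≤ mw a b + hdist mw β b y := by
        simp only [hdist]
        exact le_trans (min_le_right _ _) (iInf_le _ b)
      have hnat : 2 * β + 1 = β + (β + 1) := by omega
      rw [hnat]
      exact le_trans hsplit (add_le_add_right hedge _)
    have hA := hhop x a ha
    have hB := hhop b y hb
    have hone : (1 : ℝ≥0∞) ≤ 1 + (ε₁ : ℝ≥0∞) := le_add_right le_rfl
    have hE : mw a b ≤ (1 + (ε₁ : ℝ≥0∞)) * w a b :=
      le_trans (min_le_left _ _) (le_mul_of_one_le_left zero_le hone)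
    calc hdist mw (2 * β + 1) x y
        ≤ hdist mw β x a + (mw a b + hdist mw β b y) := hhops
      _ ≤ (1 + (ε₁ : ℝ≥0∞)) * gdist w x a +
          ((1 + (ε₁ : ℝ≥0∞)) * w a b + (1 + (ε₁ : ℝ≥0∞)) * gdist w b y) :=
          add_le_add hA (add_le_add hE hB)
      _ = (1 + (ε₁ : ℝ≥0∞)) * (gdist w x a + w a b + gdist w b y) := by ring
      _ ≤ (1 + (ε₁ : ℝ≥0∞)) * gdist w x y := mul_le_mul_right hsum _
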